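/- Suppose L, U : {0,1,…,m}^n → ℝ are such that for every string x ∈ {0,1,…,m}^n one has ∑_{y ⪯ x, |y|−|x| even} L(y)/D_y[{z ⪯ y}] − ∑_{y ⪯ x, |y|−|x| odd} U(y)/D_y[{z ⪯ y}] ≥ 0. Then every probability distribution pr on {0,1,…,m}^n satisfying L(y) ≤ pr[{z ⪯ y}] ≤ U(y) for all strings y lies in the convex hull of the (m+1)^n product distributions {D_w : w ∈ {0,1,…,m}^n}. -/

import Mathlib

open Finset

/-- The weight `|w|` of a string: the number of nonzero coordinates. -/
def strWt {m n : ℕ} (w : Fin n → Fin (m + 1)) : ℕ :=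
  (Finset.univ.filter fun j => w j ≠ 0).card

/-- The product distribution `D_w` associated to a string `w`: coordinates are
independent, coordinate `j` equals `w j` with probability `q j (w j)` and `0`
with probability `1 - q j (w j)` when `w j ≠ 0`, and equals `0` surely when `w j = 0`. -/
noncomputable def prodDist {m n : ℕ} (q : Fin n → Fin (m + 1) → ℝ)
    (w : Fin n → Fin (m + 1)) : (Fin n → Fin (m + 1)) → ℝ := fun z =>
  ∏ j, if w j = 0 then (if z j = 0 then (1 : ℝ) else 0)
    else if z j = w j then q j (w j) else if z j = 0 then 1 - q j (w j) else 0

/-- `cumul p y = p[{z ⪯ y}] = ∑_{z ⪯ y} p z`, where `z ⪯ y` iff every coordinate of `y`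
is `0` or agrees with `z`. -/
noncomputable def cumul {m n : ℕ} (p : (Fin n → Fin (m + 1)) → ℝ)
    (y : Fin n → Fin (m + 1)) : ℝ :=
  ∑ z ∈ Finset.univ.filter (fun z => ∀ j, y j = 0 ∨ y j = z j), p z

namespace GMLaux

variable {m n : ℕ}

/-- `Rel y x` : `x` refines `y` (agrees with `y` on the support of `y`). -/
def Rel (y x : Fin n → Fin (m + 1)) : Prop := ∀ j, y j = 0 ∨ y j = x j

instance (y x : Fin n → Fin (m + 1)) : Decidable (Rel y x) :=
  inferInstanceAs (Decidable (∀ j, y j = 0 ∨ y j = x j))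

lemma rel_refl (y : Fin n → Fin (m + 1)) : Rel y y := fun _ => Or.inr rfl

lemma rel_trans {y x w : Fin n → Fin (m + 1)} (h1 : Rel y x) (h2 : Rel x w) : Rel y w := by
  intro j
  rcases h1 j with h | h
  · exact Or.inl h
  · rcases h2 j with h' | h'
    · exact Or.inl (h.trans h')
    · exact Or.inr (h.trans h')

def supp (y : Fin n → Fin (m + 1)) : Finset (Fin n) := univ.filter fun j => y j ≠ 0

lemma strWt_eq (y : Fin n → Fin (m + 1)) : strWt y = (supp y).card := rfl

lemma supp_subset {y x : Fin n → Fin (m + 1)} (h : Rel y x) : supp y ⊆ supp x := by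
  intro j hj
  simp only [supp, mem_filter, mem_univ, true_and] at *
  rcases h j with h' | h'
  · exact absurd h' hj
  · rw [← h']; exact hj

lemma strWt_le {y x : Fin n → Fin (m + 1)} (h : Rel y x) : strWt y ≤ strWt x :=
  card_le_card (supp_subset h)

lemma neg_one_pow_sub {a b : ℕ} (h : a ≤ b) : ((-1 : ℝ)) ^ (b - a) = (-1) ^ b * (-1) ^ a := by
  have h2 : ((-1 : ℝ)) ^ a * (-1) ^ a = 1 := by
    rw [← pow_add, ← two_mul, pow_mul]; norm_num
  calc ((-1 : ℝ)) ^ (b - a) = (-1) ^ (b - a) * ((-1) ^ a * (-1) ^ a) := by rw [h2, mul_one]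
    _ = (-1) ^ (b - a + a) * (-1) ^ a := by rw [pow_add, mul_assoc]
    _ = (-1) ^ b * (-1) ^ a := by rw [Nat.sub_add_cancel h]

/-- Key combinatorial cancellation. -/
lemma key_sum (y w : Fin n → Fin (m + 1)) :
    ∑ x ∈ univ.filter (fun x => Rel y x ∧ Rel x w), ((-1 : ℝ)) ^ (strWt x)
      = if y = w then ((-1 : ℝ)) ^ (strWt y) else 0 := by
  by_cases hyw : Rel y w
  · set T := supp w \ supp y with hT
    have hmain : ∑ x ∈ univ.filter (fun x => Rel y x ∧ Rel x w), ((-1 : ℝ)) ^ (strWt x)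
        = ∑ S ∈ T.powerset, ((-1 : ℝ)) ^ (S.card + strWt y) := by
      refine Finset.sum_nbij' (fun x => supp x \ supp y)
        (fun S => fun k => if k ∈ S then w k else y k) ?_ ?_ ?_ ?_ ?_
      · intro x hx
        simp only [mem_filter, mem_univ, true_and] at hx
        exact mem_powerset.2 (sdiff_subset_sdiff (supp_subset hx.2) le_rfl)
      · intro S hS
        rw [mem_powerset] at hS
        simp only [mem_filter, mem_univ, true_and]
        constructor
        · intro j
          by_cases hyj : y j = 0
          · exact Or.inl hyj
          · have hjS : j ∉ S := by
              intro hjmem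
              have := hS hjmem
              rw [hT, mem_sdiff] at this
              exact this.2 (by simp [supp, hyj])
            exact Or.inr (by simp [hjS])
        · intro j
          by_cases hjS : j ∈ S
          · exact Or.inr (by simp [hjS])
          · simp only [hjS, if_false]
            exact hyw j
      · intro x hx
        simp only [mem_filter, mem_univ, true_and] at hx
        funext k
        by_cases hk : k ∈ supp x \ supp y
        · simp only [hk, if_true]
          rw [mem_sdiff] at hk
          have hxk : x k ≠ 0 := by simpa [supp] using hk.1
          rcases hx.2 k with h' | h'
          · exact absurd h' hxk
          · exact h'.symm
        · simp only [hk, if_false]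
          rw [mem_sdiff] at hk
          push_neg at hk
          by_cases hks : k ∈ supp x
          · have hky : k ∈ supp y := hk hks
            rcases hx.1 k with h' | h'
            · exact absurd h' (by simpa [supp] using hky)
            · exact h'
          · have hxk : x k = 0 := by simpa [supp] using hks
            rcases hx.1 k with h' | h'
            · rw [h', hxk]
            · exact h'
      · intro S hS
        rw [mem_powerset] at hS
        ext k
        simp only [mem_sdiff, supp, mem_filter, mem_univ, true_and]
        by_cases hkS : k ∈ S
        · have hk := hS hkS
          rw [hT, mem_sdiff] at hk
          simp only [supp, mem_filter, mem_univ, true_and] at hk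
          simp [hkS, hk.1, hk.2]
        · simp only [hkS, if_false, iff_false]
          intro hcon
          exact hcon.2 hcon.1
      · intro x hx
        simp only [mem_filter, mem_univ, true_and] at hx
        have hsub : supp y ⊆ supp x := supp_subset hx.1
        have : (supp x \ supp y).card + (supp y).card = (supp x).card :=
          Finset.card_sdiff_add_card_eq_card hsub
        rw [strWt_eq, strWt_eq, ← this]
    rw [hmain]
    have h2 : ∑ S ∈ T.powerset, ((-1 : ℝ)) ^ (S.card + strWt y)
        = ((-1 : ℝ)) ^ (strWt y) * ∑ S ∈ T.powerset, ((-1 : ℝ)) ^ S.card := by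
      rw [Finset.mul_sum]
      exact Finset.sum_congr rfl fun S _ => by rw [pow_add, mul_comm]
    have h3 : ∑ S ∈ T.powerset, ((-1 : ℝ)) ^ S.card = if T = ∅ then 1 else 0 := by
      have hz := Finset.sum_powerset_neg_one_pow_card (x := T)
      have : ((∑ S ∈ T.powerset, (-1 : ℤ) ^ S.card : ℤ) : ℝ)
          = ∑ S ∈ T.powerset, ((-1 : ℝ)) ^ S.card := by push_cast; rfl
      rw [← this, hz]
      split <;> norm_num
    have h4 : (T = ∅) ↔ (y = w) := by
      constructor
      · intro hTe
        have hsub : supp w ⊆ supp y := by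
          rwa [hT, Finset.sdiff_eq_empty_iff_subset] at hTe
        funext j
        rcases hyw j with h' | h'
        · by_cases hwj : w j = 0
          · rw [h', hwj]
          · have : j ∈ supp y := hsub (by simp [supp, hwj])
            simp only [supp, mem_filter, mem_univ, true_and] at this
            exact absurd h' this
        · exact h'
      · intro h; rw [hT, h, Finset.sdiff_eq_empty_iff_subset]
    rw [h2, h3]
    by_cases hcase : y = w
    · rw [if_pos ((h4.2 hcase)), if_pos hcase, mul_one]
    · rw [if_neg (fun hc => hcase (h4.1 hc)), if_neg hcase, mul_zero]
  · have hemp : univ.filter (fun x => Rel y x ∧ Rel x w) = ∅ := by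
      refine Finset.filter_false_of_mem fun x _ => ?_
      intro hcon
      exact hyw (rel_trans hcon.1 hcon.2)
    have hne : y ≠ w := fun h => hyw (h ▸ rel_refl y)
    rw [hemp, Finset.sum_empty, if_neg hne]

/-- Swap-and-cancel lemma. -/
lemma swap_eval (a : Fin n → Fin (m + 1)) (G : (Fin n → Fin (m + 1)) → ℝ) :
    ∑ b ∈ univ.filter (Rel a), ((-1 : ℝ)) ^ (strWt b) * (∑ c ∈ univ.filter (Rel b), G c)
      = ((-1 : ℝ)) ^ (strWt a) * G a := by
  have step1 : ∑ b ∈ univ.filter (Rel a), ((-1 : ℝ)) ^ (strWt b) * (∑ c ∈ univ.filter (Rel b), G c)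
      = ∑ b : Fin n → Fin (m + 1), ∑ c : Fin n → Fin (m + 1),
          if Rel a b ∧ Rel b c then ((-1 : ℝ)) ^ (strWt b) * G c else 0 := by
    rw [Finset.sum_filter]
    refine Finset.sum_congr rfl fun b _ => ?_
    by_cases hab : Rel a b
    · simp only [hab, if_true, true_and, Finset.mul_sum, Finset.sum_filter, mul_ite, mul_zero]
    · simp [hab]
  rw [step1, Finset.sum_comm]
  have step2 : ∀ c : Fin n → Fin (m + 1),
      (∑ b : Fin n → Fin (m + 1), if Rel a b ∧ Rel b c then ((-1 : ℝ)) ^ (strWt b) * G c else 0)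
        = (if a = c then ((-1 : ℝ)) ^ (strWt a) else 0) * G c := by
    intro c
    rw [← Finset.sum_filter, ← Finset.sum_mul, key_sum]
  rw [Finset.sum_congr rfl fun c _ => step2 c]
  simp only [ite_mul, zero_mul]
  rw [Finset.sum_ite_eq]
  simp

/-- Möbius inversion, first direction. -/
lemma moebius (F : (Fin n → Fin (m + 1)) → ℝ) (y : Fin n → Fin (m + 1)) :
    ∑ x ∈ univ.filter (Rel y),
        (∑ w ∈ univ.filter (Rel x), ((-1 : ℝ)) ^ (strWt w - strWt x) * F w) = F y := by
  have hinner : ∀ x, (∑ w ∈ univ.filter (Rel x), ((-1 : ℝ)) ^ (strWt w - strWt x) * F w)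
      = ((-1 : ℝ)) ^ (strWt x) * ∑ w ∈ univ.filter (Rel x), ((-1 : ℝ)) ^ (strWt w) * F w := by
    intro x
    rw [Finset.mul_sum]
    refine Finset.sum_congr rfl fun w hw => ?_
    simp only [mem_filter, mem_univ, true_and] at hw
    rw [neg_one_pow_sub (strWt_le hw)]
    ring
  rw [Finset.sum_congr rfl fun x _ => hinner x, swap_eval y (fun w => ((-1 : ℝ)) ^ (strWt w) * F w),
    ← mul_assoc, ← pow_add, ← two_mul, pow_mul]
  norm_num

lemma cumul_eq (p : (Fin n → Fin (m + 1)) → ℝ) (y : Fin n → Fin (m + 1)) :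
    cumul p y = ∑ z ∈ univ.filter (Rel y), p z := by
  unfold cumul
  refine Finset.sum_congr ?_ fun _ _ => rfl
  ext z
  simp [Rel]

/-- Möbius inversion, second direction: recovering `p` from `cumul p`. -/
lemma moebius' (p : (Fin n → Fin (m + 1)) → ℝ) (x : Fin n → Fin (m + 1)) :
    ∑ w ∈ univ.filter (Rel x), ((-1 : ℝ)) ^ (strWt w - strWt x) * cumul p w = p x := by
  have hinner : ∀ w ∈ univ.filter (Rel x),
      ((-1 : ℝ)) ^ (strWt w - strWt x) * cumul p w
        = ((-1 : ℝ)) ^ (strWt x) * (((-1 : ℝ)) ^ (strWt w) * (∑ z ∈ univ.filter (Rel w), p z)) := by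
    intro w hw
    simp only [mem_filter, mem_univ, true_and] at hw
    rw [neg_one_pow_sub (strWt_le hw), cumul_eq]
    ring
  rw [Finset.sum_congr rfl hinner, ← Finset.mul_sum, swap_eval x p, ← mul_assoc, ← pow_add,
    ← two_mul, pow_mul]
  norm_num

/-- Cumulative probability of a product distribution. -/
lemma cumul_prodDist (q : Fin n → Fin (m + 1) → ℝ) (w y : Fin n → Fin (m + 1)) :
    cumul (prodDist q w) y
      = if Rel y w then ∏ j ∈ univ.filter (fun j => y j ≠ 0), q j (y j) else 0 := by
  classical
  have hset : univ.filter (fun z : Fin n → Fin (m + 1) => ∀ j, y j = 0 ∨ y j = z j)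
      = Fintype.piFinset (fun j => if y j = 0 then (univ : Finset (Fin (m + 1))) else {y j}) := by
    ext z
    simp only [mem_filter, mem_univ, true_and, Fintype.mem_piFinset]
    refine forall_congr' fun j => ?_
    by_cases hyj : y j = 0 <;> simp [hyj, eq_comm]
  unfold cumul prodDist
  rw [hset, ← Finset.prod_univ_sum (fun j => if y j = 0 then (univ : Finset (Fin (m + 1))) else {y j})
    (fun j a => if w j = 0 then (if a = 0 then (1 : ℝ) else 0)
      else if a = w j then q j (w j) else if a = 0 then 1 - q j (w j) else 0)]
  have hcoord : ∀ j, (∑ a ∈ (if y j = 0 then (univ : Finset (Fin (m + 1))) else {y j}),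
        (if w j = 0 then (if a = 0 then (1 : ℝ) else 0)
          else if a = w j then q j (w j) else if a = 0 then 1 - q j (w j) else 0))
      = if y j = 0 then 1 else (if y j = w j then q j (y j) else 0) := by
    intro j
    by_cases hyj : y j = 0
    · simp only [hyj, if_true]
      by_cases hwj : w j = 0
      · simp only [hwj, if_true]
        rw [Finset.sum_ite_eq' univ (0 : Fin (m + 1)) (fun _ => (1 : ℝ))]
        simp
      · simp only [hwj, if_false]
        have hterm : ∀ a : Fin (m + 1),
            (if a = w j then q j (w j) else if a = 0 then 1 - q j (w j) else 0)
              = (if a = w j then q j (w j) else 0) + (if a = 0 then 1 - q j (w j) else 0) := by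
          intro a
          by_cases h1 : a = w j
          · have h2 : a ≠ 0 := by rw [h1]; exact hwj
            simp [h1, h2, hwj]
          · simp [h1]
        rw [Finset.sum_congr rfl fun a _ => hterm a, Finset.sum_add_distrib,
          Finset.sum_ite_eq' univ (w j) (fun _ => q j (w j)),
          Finset.sum_ite_eq' univ (0 : Fin (m + 1)) (fun _ => 1 - q j (w j))]
        simp
    · simp only [hyj, if_false, Finset.sum_singleton]
      by_cases hyw : y j = w j
      · have hwj : w j ≠ 0 := fun h => hyj (hyw.trans h)
        simp [hwj, hyw]
      · by_cases hwj : w j = 0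
        · simp [hwj, hyj, hyw]
        · simp [hwj, hyj, hyw]
  rw [Finset.prod_congr rfl fun j _ => hcoord j]
  by_cases hrel : Rel y w
  · rw [if_pos hrel]
    have : ∀ j : Fin n, (if y j = 0 then (1 : ℝ) else (if y j = w j then q j (y j) else 0))
        = if y j ≠ 0 then q j (y j) else 1 := by
      intro j
      by_cases hyj : y j = 0
      · simp [hyj]
      · rcases hrel j with h | h
        · exact absurd h hyj
        · simp [hyj, h]
    rw [Finset.prod_congr rfl fun j _ => this j, ← Finset.prod_filter]
  · rw [if_neg hrel]
    rw [Rel] at hrel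
    push_neg at hrel
    obtain ⟨j, hj1, hj2⟩ := hrel
    exact Finset.prod_eq_zero (Finset.mem_univ j) (by simp [hj1, hj2])

end GMLaux


open GMLaux in
/-- Generalized Mixing Lemma with upper and lower bounds: if `L, U : {0,1,…,m}ⁿ → ℝ`
satisfy, for every string `x`,
`∑_{y ⪯ x, |y|−|x| even} L(y)/D_y[{z ⪯ y}] − ∑_{y ⪯ x, |y|−|x| odd} U(y)/D_y[{z ⪯ y}] ≥ 0`,
then every probability distribution `pr` with `L(y) ≤ pr[{z ⪯ y}] ≤ U(y)` for all `y`
lies in the convex hull of the product distributions `D_w`. -/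
theorem generalized_mixing_lemma_bounds (m n : ℕ) (hm : 1 ≤ m) (hn : 1 ≤ n)
    (q : Fin n → Fin (m + 1) → ℝ)
    (hq : ∀ (j : Fin n) (i : Fin (m + 1)), i ≠ 0 → 0 < q j i ∧ q j i ≤ 1)
    (L U : (Fin n → Fin (m + 1)) → ℝ)
    (hLU : ∀ x : Fin n → Fin (m + 1),
      0 ≤ (∑ y ∈ Finset.univ.filter
              (fun y => (∀ j, x j = 0 ∨ x j = y j) ∧ Even (strWt y - strWt x)),
            L y / cumul (prodDist q y) y)
         - ∑ y ∈ Finset.univ.filter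
              (fun y => (∀ j, x j = 0 ∨ x j = y j) ∧ Odd (strWt y - strWt x)),
            U y / cumul (prodDist q y) y) :
    ∀ pr : (Fin n → Fin (m + 1)) → ℝ,
      (∀ z, 0 ≤ pr z) → (∑ z, pr z = 1) →
      (∀ y, L y ≤ cumul pr y ∧ cumul pr y ≤ U y) →
      pr ∈ convexHull ℝ (Set.range (prodDist q)) := by
  classical
  intro pr hpr0 hpr1 hprLU
  set Q : (Fin n → Fin (m + 1)) → ℝ :=
    fun y => ∏ j ∈ univ.filter (fun j => y j ≠ 0), q j (y j) with hQ
  have hQpos : ∀ y, 0 < Q y := by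
    intro y
    refine Finset.prod_pos fun j hj => ?_
    simp only [mem_filter, mem_univ, true_and] at hj
    exact (hq j (y j) hj).1
  have hQy : ∀ y, cumul (prodDist q y) y = Q y := by
    intro y; rw [cumul_prodDist, if_pos (rel_refl y)]
  set F : (Fin n → Fin (m + 1)) → ℝ :=
    fun w => cumul pr w / cumul (prodDist q w) w with hF
  set c : (Fin n → Fin (m + 1)) → ℝ :=
    fun x => ∑ w ∈ univ.filter (Rel x), ((-1 : ℝ)) ^ (strWt w - strWt x) * F w with hc
  have hdpos : ∀ w, 0 < cumul (prodDist q w) w := fun w => by rw [hQy]; exact hQpos w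
  -- nonnegativity of the coefficients
  have hc0 : ∀ x, 0 ≤ c x := by
    intro x
    have hsplit := Finset.sum_filter_add_sum_filter_not (univ.filter (Rel x))
      (fun w => Even (strWt w - strWt x)) (fun w => ((-1 : ℝ)) ^ (strWt w - strWt x) * F w)
    rw [Finset.filter_filter, Finset.filter_filter] at hsplit
    have heven : ∑ w ∈ univ.filter
          (fun w => (∀ j, x j = 0 ∨ x j = w j) ∧ Even (strWt w - strWt x)),
          L w / cumul (prodDist q w) w
        ≤ ∑ w ∈ univ.filter (fun w => Rel x w ∧ Even (strWt w - strWt x)),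
            ((-1 : ℝ)) ^ (strWt w - strWt x) * F w := by
      have hss : univ.filter
            (fun w : Fin n → Fin (m + 1) =>
              (∀ j, x j = 0 ∨ x j = w j) ∧ Even (strWt w - strWt x))
          = univ.filter (fun w : Fin n → Fin (m + 1) => Rel x w ∧ Even (strWt w - strWt x)) := by
        ext w; rw [mem_filter, mem_filter]; rfl
      rw [hss]
      refine Finset.sum_le_sum fun w hw => ?_
      simp only [mem_filter, mem_univ, true_and] at hw
      rw [hw.2.neg_one_pow, one_mul, hF]
      exact (div_le_div_iff_of_pos_right (hdpos w)).2 (hprLU w).1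
    have hodd : ∑ w ∈ univ.filter (fun w => Rel x w ∧ ¬Even (strWt w - strWt x)),
            ((-1 : ℝ)) ^ (strWt w - strWt x) * F w
        ≥ -∑ w ∈ univ.filter
            (fun w => (∀ j, x j = 0 ∨ x j = w j) ∧ Odd (strWt w - strWt x)),
            U w / cumul (prodDist q w) w := by
      have hss : univ.filter
            (fun w : Fin n → Fin (m + 1) =>
              (∀ j, x j = 0 ∨ x j = w j) ∧ Odd (strWt w - strWt x))
          = univ.filter
            (fun w : Fin n → Fin (m + 1) => Rel x w ∧ ¬Even (strWt w - strWt x)) := by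
        ext w; simp [GMLaux.Rel, Nat.not_even_iff_odd]
      rw [hss, ← Finset.sum_neg_distrib]
      refine Finset.sum_le_sum fun w hw => ?_
      simp only [mem_filter, mem_univ, true_and] at hw
      have hoddw : Odd (strWt w - strWt x) := Nat.not_even_iff_odd.1 hw.2
      rw [hoddw.neg_one_pow, neg_one_mul, hF]
      exact neg_le_neg ((div_le_div_iff_of_pos_right (hdpos w)).2 (hprLU w).2)
    have hx := hLU x
    have : c x = (∑ w ∈ univ.filter (fun w => Rel x w ∧ Even (strWt w - strWt x)),
            ((-1 : ℝ)) ^ (strWt w - strWt x) * F w)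
        + ∑ w ∈ univ.filter (fun w => Rel x w ∧ ¬Even (strWt w - strWt x)),
            ((-1 : ℝ)) ^ (strWt w - strWt x) * F w := by
      rw [hsplit, hc]
    linarith
  -- sum of coefficients is 1
  have hmoeb : ∀ y, ∑ x ∈ univ.filter (Rel y), c x = F y := by
    intro y
    have := moebius F y
    simpa only [hc] using this
  have hone : ∑ x, c x = 1 := by
    have huniv : (univ : Finset (Fin n → Fin (m + 1)))
        = univ.filter (Rel (fun _ => (0 : Fin (m + 1)))) := by
      ext x; simp [GMLaux.Rel]
    have h1 : ∑ x, c x = F (fun _ => (0 : Fin (m + 1))) := by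
      rw [huniv]; exact hmoeb _
    have h4 : F (fun _ => (0 : Fin (m + 1)))
        = cumul pr (fun _ => (0 : Fin (m + 1)))
          / cumul (prodDist q (fun _ => (0 : Fin (m + 1)))) (fun _ => (0 : Fin (m + 1))) := rfl
    have h2 : cumul pr (fun _ => (0 : Fin (m + 1))) = 1 := by
      rw [cumul_eq, ← huniv, hpr1]
    have h3 : cumul (prodDist q (fun _ => (0 : Fin (m + 1)))) (fun _ => (0 : Fin (m + 1)))
        = 1 := by
      rw [hQy, hQ]
      simp
    rw [h1, h4, h2, h3, div_one]
  -- cumulative probabilities of the mixture agree with those of pr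
  have hcmix : ∀ y, cumul (fun z => ∑ x, c x * prodDist q x z) y = cumul pr y := by
    intro y
    rw [cumul_eq, Finset.sum_comm]
    have hstep : ∀ x : Fin n → Fin (m + 1),
        ∑ z ∈ univ.filter (Rel y), c x * prodDist q x z
          = if Rel y x then c x * Q y else 0 := by
      intro x
      rw [← Finset.mul_sum, ← cumul_eq, cumul_prodDist]
      by_cases h : Rel y x <;> simp [h, hQ]
    rw [Finset.sum_congr rfl fun x _ => hstep x, ← Finset.sum_filter, ← Finset.sum_mul,
      hmoeb y]
    show cumul pr y / cumul (prodDist q y) y * Q y = cumul pr y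
    rw [hQy y]
    exact div_mul_cancel₀ _ (ne_of_gt (hQpos y))
  -- the mixture equals pr
  have hfun : pr = fun z => ∑ x, c x * prodDist q x z := by
    funext z
    have h1 := moebius' pr z
    have h2 := moebius' (fun zz => ∑ x, c x * prodDist q x zz) z
    rw [← h1, ← h2]
    exact Finset.sum_congr rfl fun w _ => by rw [hcmix w]
  -- conclude
  have hsmul : (fun z => ∑ x, c x * prodDist q x z)
      = ∑ x : Fin n → Fin (m + 1), c x • prodDist q x := by
    funext z
    rw [Finset.sum_apply]
    simp
  have hmem := Finset.centerMass_mem_convexHull (univ : Finset (Fin n → Fin (m + 1)))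
    (fun x _ => hc0 x) (by rw [hone]; norm_num)
    (fun x _ => (Set.mem_range_self x : prodDist q x ∈ Set.range (prodDist q)))
  rw [Finset.centerMass_eq_of_sum_1 _ _ hone] at hmem
  rw [hfun, hsmul]
  exact hmem
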